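/- For all integers i, j ≥ 0, the family of arc j-visibility graphs is not contained in the family of bar i-visibility graphs: there exists a finite simple graph that is an arc j-visibility graph but is not isomorphic to any bar i-visibility graph. -/

import Mathlib

open Real

/-- Membership of the angle `φ` (taken mod `2π`) in the closed circular arc
starting at angle `s` and extending counterclockwise through angular length `L`. -/
def arcMem (s L φ : ℝ) : Prop :=
  ∃ t : ℝ, 0 ≤ t ∧ t ≤ L ∧ ∃ z : ℤ, φ = s + t + 2 * π * z

/-- `L` describes a valid arc `k`-visibility representation: each arc is a
nonempty proper closed arc, i.e. spans an angle in `[0, 2π)`. -/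
def IsArcRep {n : ℕ} (L : Fin n → ℝ) : Prop :=
  ∀ i, 0 ≤ L i ∧ L i < 2 * π

/-- Adjacency condition for `i < j` in the arc `k`-visibility representation with
start angles `s` and lengths `L`: either (a) a radial line of sight crossing at
most `k` intervening arcs, or (b) a line of sight through the center crossing at
most `k` other arcs (an arc crossed on both sides counted once). -/
def arcAdj (k : ℕ) {n : ℕ} (s L : Fin n → ℝ) (i j : Fin n) : Prop :=
  (∃ φ : ℝ, arcMem (s i) (L i) φ ∧ arcMem (s j) (L j) φ ∧
      ({m : Fin n | i < m ∧ m < j ∧ arcMem (s m) (L m) φ}.ncard ≤ k))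
  ∨ (∃ φ : ℝ, arcMem (s i) (L i) φ ∧ arcMem (s j) (L j) (φ + π) ∧
      ({m : Fin n | m ≠ i ∧ m ≠ j ∧
          ((m < i ∧ arcMem (s m) (L m) φ) ∨ (m < j ∧ arcMem (s m) (L m) (φ + π)))}.ncard ≤ k))

/-- The arc `k`-visibility graph of the representation `(s, L)`. -/
def arcGraph (k : ℕ) {n : ℕ} (s L : Fin n → ℝ) : SimpleGraph (Fin n) :=
  SimpleGraph.fromRel (fun i j => i < j ∧ arcAdj k s L i j)

/-- Adjacency (before symmetrization) in the bar `k`-visibility representation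
with bars `[l i, r i] × {y i}`: there is a vertical line of sight at abscissa `x`
between bars `i` and `j` crossing at most `k` intervening bars. -/
def barAdj (k : ℕ) {n : ℕ} (l r y : Fin n → ℝ) (i j : Fin n) : Prop :=
  ∃ x : ℝ, l i ≤ x ∧ x ≤ r i ∧ l j ≤ x ∧ x ≤ r j ∧
    ({m : Fin n | min (y i) (y j) < y m ∧ y m < max (y i) (y j) ∧
        l m ≤ x ∧ x ≤ r m}.ncard ≤ k)

/-- The bar `k`-visibility graph of the representation `(l, r, y)`. -/
def barGraph (k : ℕ) {n : ℕ} (l r y : Fin n → ℝ) : SimpleGraph (Fin n) :=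
  SimpleGraph.fromRel (barAdj k l r y)

/-- A graph is a bar `k`-visibility graph if it is isomorphic to the bar
`k`-visibility graph of some representation: finitely many nondegenerate bars
at pairwise distinct heights. -/
def IsBarKVisibilityGraph (k : ℕ) {V : Type*} (G : SimpleGraph V) : Prop :=
  ∃ (n : ℕ) (l r y : Fin n → ℝ), (∀ i, l i < r i) ∧ Function.Injective y ∧
    Nonempty (G ≃g barGraph k l r y)

/-- A graph is an arc `k`-visibility graph if it is isomorphic to the arc
`k`-visibility graph of some representation. -/
def IsArcKVisibilityGraph (k : ℕ) {V : Type*} (G : SimpleGraph V) : Prop :=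
  ∃ (n : ℕ) (s L : Fin n → ℝ), IsArcRep L ∧ Nonempty (G ≃g arcGraph k s L)

namespace ArcBar

lemma two_pi_z (z : ℤ) : 2*π*z = 0 ∨ 2*π ≤ 2*π*z ∨ 2*π*z ≤ -(2*π) := by
  rcases lt_trichotomy z 0 with h|h|h
  · right; right
    have hz : (z:ℝ) ≤ -1 := by exact_mod_cast Int.le_sub_one_iff.mpr h
    nlinarith [pi_pos]
  · left; simp [h]
  · right; left
    have hz : (1:ℝ) ≤ (z:ℝ) := by exact_mod_cast h
    nlinarith [pi_pos]

lemma arcMem_of {s L φ : ℝ} (h0 : s ≤ φ) (h1 : φ ≤ s + L) : arcMem s L φ :=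
  ⟨φ - s, by linarith, by linarith, 0, by push_cast; ring⟩

lemma arcMem_wrap {s L φ : ℝ} (h0 : s ≤ φ + 2*π) (h1 : φ + 2*π ≤ s + L) : arcMem s L φ :=
  ⟨φ + 2*π - s, by linarith, by linarith, -1, by push_cast; ring⟩

lemma not_arcMem_hi {s L φ : ℝ} (h1 : s + L < φ) (h2 : φ < s + 2*π) : ¬ arcMem s L φ := by
  rintro ⟨t, ht0, htL, z, hz⟩
  rcases two_pi_z z with h|h|h
  · linarith
  · linarith
  · linarith [pi_pos]

lemma not_arcMem_lo {s L φ : ℝ} (h1 : φ < s) (h2 : s + L < φ + 2*π) : ¬ arcMem s L φ := by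
  rintro ⟨t, ht0, htL, z, hz⟩
  rcases two_pi_z z with h|h|h
  · linarith
  · linarith [pi_pos]
  · linarith

/-- turn an equality of graphs into an isomorphism -/
def gIsoOfEq {V : Type*} {G H : SimpleGraph V} (h : G = H) : G ≃g H :=
  { toEquiv := Equiv.refl V, map_rel_iff' := by subst h; exact Iff.rfl }


/-- the 4-cycle on `Fin 4`, with parts `{0,2}` and `{1,3}`. -/
def G4 : SimpleGraph (Fin 4) where
  Adj a b := (a.val + b.val) % 2 = 1
  symm := ⟨fun a b h => by
    have h' : (a.val + b.val) % 2 = 1 := h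
    show (b.val + a.val) % 2 = 1
    rwa [Nat.add_comm]⟩
  loopless := ⟨fun a h => by
    have h' : (a.val + a.val) % 2 = 1 := h
    omega⟩

instance : DecidableRel G4.Adj :=
  fun a b => inferInstanceAs (Decidable ((a.val + b.val) % 2 = 1))

lemma barAdj_symm {k n : ℕ} {l r y : Fin n → ℝ} {a b : Fin n}
    (h : barAdj k l r y a b) : barAdj k l r y b a := by
  obtain ⟨x, h1, h2, h3, h4, h5⟩ := h
  exact ⟨x, h3, h4, h1, h2, by rwa [min_comm, max_comm]⟩

lemma not_between_self {u v : ℝ} (h1 : min u v < u) (h2 : u < max u v) : False := by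
  rcases le_total u v with h|h
  · rw [min_eq_left h] at h1; exact lt_irrefl _ h1
  · rw [max_eq_left h] at h2; exact lt_irrefl _ h2

lemma not_between_self' {u v : ℝ} (h1 : min u v < v) (h2 : v < max u v) : False := by
  rcases le_total u v with h|h
  · rw [max_eq_right h] at h2; exact lt_irrefl _ h2
  · rw [min_eq_right h] at h1; exact lt_irrefl _ h1

lemma sandwich {u v p q : ℝ} (h1 : min p q < u) (h2 : u < max p q)
    (h3 : min p q < v) (h4 : v < max p q)
    (h5 : min u v < p) (h6 : p < max u v) : False := by
  have ha : min p q < min u v := lt_min h1 h3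
  have hb : max u v < max p q := max_lt h2 h4
  have hc : min p q < p := lt_trans ha h5
  have hd : p < max p q := lt_trans h6 hb
  rcases le_total p q with h|h
  · rw [min_eq_left h] at hc; exact lt_irrefl _ hc
  · rw [max_eq_left h] at hd; exact lt_irrefl _ hd

lemma sandwich' {u v p q : ℝ} (h1 : min p q < u) (h2 : u < max p q)
    (h3 : min p q < v) (h4 : v < max p q)
    (h5 : min u v < q) (h6 : q < max u v) : False :=
  sandwich (by rw [min_comm]; exact h1) (by rw [max_comm]; exact h2)
    (by rw [min_comm]; exact h3) (by rw [max_comm]; exact h4) h5 h6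

lemma c4_not_bar (i : ℕ) (hi : 1 ≤ i) : ¬ IsBarKVisibilityGraph i G4 := by
  rintro ⟨n, l, r, y, hlr, hy, ⟨e⟩⟩
  -- basic facts transferred through the isomorphism
  have hne : ∀ a b : Fin 4, a ≠ b → (e a : Fin n) ≠ e b := by
    intro a b h hc; exact h (e.toEquiv.injective hc)
  have hadj : ∀ a b : Fin 4, G4.Adj a b → barAdj i l r y (e a) (e b) := by
    intro a b h
    have h2 : (barGraph i l r y).Adj (e a) (e b) := e.map_rel_iff.mpr h
    rcases ((SimpleGraph.fromRel_adj (barAdj i l r y) (e a) (e b)).mp h2).2 with h3 | h3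
    · exact h3
    · exact barAdj_symm h3
  have hnadj : ∀ a b : Fin 4, ¬ G4.Adj a b → a ≠ b → ¬ barAdj i l r y (e a) (e b) := by
    intro a b h hab hc
    apply h
    rw [← e.map_rel_iff]
    exact (SimpleGraph.fromRel_adj (barAdj i l r y) (e a) (e b)).mpr ⟨hne a b hab, Or.inl hc⟩
  have huniv : ∀ m : Fin n, m = e 0 ∨ m = e 1 ∨ m = e 2 ∨ m = e 3 := by
    intro m
    obtain ⟨k, hk⟩ : ∃ k : Fin 4, e k = m := ⟨e.symm m, by simp⟩
    fin_cases k
    · exact Or.inl hk.symm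
    · exact Or.inr (Or.inl hk.symm)
    · exact Or.inr (Or.inr (Or.inl hk.symm))
    · exact Or.inr (Or.inr (Or.inr hk.symm))
  -- abbreviations
  set S := (e 0 : Fin n) with hS
  set A := (e 1 : Fin n) with hA
  set T := (e 2 : Fin n) with hT
  set B := (e 3 : Fin n) with hB
  have hSA := hadj 0 1 (by decide)
  have hSB := hadj 0 3 (by decide)
  have hTA := hadj 2 1 (by decide)
  have hTB := hadj 2 3 (by decide)
  have hnST := hnadj 0 2 (by decide) (by decide)
  have hnAB := hnadj 1 3 (by decide) (by decide)
  -- key: a sight line between S and T with 0 visible blockers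
  have getST : ∀ x : ℝ, l S ≤ x → x ≤ r S → l T ≤ x → x ≤ r T →
      ¬ (l A ≤ x ∧ x ≤ r A ∧ min (y S) (y T) < y A ∧ y A < max (y S) (y T)) →
      ¬ (l B ≤ x ∧ x ≤ r B ∧ min (y S) (y T) < y B ∧ y B < max (y S) (y T)) →
      False := by
    intro x c1 c2 c3 c4 hA' hB'
    apply hnST
    refine ⟨x, c1, c2, c3, c4, ?_⟩
    have hempty : {m : Fin n | min (y S) (y T) < y m ∧ y m < max (y S) (y T) ∧
        l m ≤ x ∧ x ≤ r m} = ∅ := by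
      rw [Set.eq_empty_iff_forall_notMem]
      rintro m ⟨m1, m2, m3, m4⟩
      rcases huniv m with rfl | rfl | rfl | rfl
      · exact not_between_self m1 m2
      · exact hA' ⟨m3, m4, m1, m2⟩
      · exact not_between_self' m1 m2
      · exact hB' ⟨m3, m4, m1, m2⟩
    rw [hempty, Set.ncard_empty]
    exact Nat.zero_le i
  by_cases hAB : ∃ x : ℝ, (l A ≤ x ∧ x ≤ r A) ∧ (l B ≤ x ∧ x ≤ r B)
  · -- A and B overlap: both S and T must block, then S,T overlap with no blockers
    obtain ⟨x, ⟨a1, a2⟩, ⟨b1, b2⟩⟩ := hAB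
    have hcard : ¬ ({m : Fin n | min (y A) (y B) < y m ∧ y m < max (y A) (y B) ∧
        l m ≤ x ∧ x ≤ r m}.ncard ≤ i) := by
      intro hc
      exact hnAB ⟨x, a1, a2, b1, b2, hc⟩
    set Z := {m : Fin n | min (y A) (y B) < y m ∧ y m < max (y A) (y B) ∧
        l m ≤ x ∧ x ≤ r m} with hZ
    have hsub : Z ⊆ {S, T} := by
      intro m hm
      obtain ⟨m1, m2, m3, m4⟩ := hm
      rcases huniv m with rfl | rfl | rfl | rfl
      · exact Set.mem_insert _ _
      · exact (not_between_self m1 m2).elim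
      · exact Set.mem_insert_of_mem _ rfl
      · exact (not_between_self' m1 m2).elim
    have hSin : S ∈ Z := by
      by_contra h
      have : Z ⊆ {T} := by
        intro m hm; rcases hsub hm with h1 | h1
        · exact absurd (h1 ▸ hm) h
        · exact h1
      have := Set.ncard_le_ncard this (Set.finite_singleton T)
      rw [Set.ncard_singleton] at this
      omega
    have hTin : T ∈ Z := by
      by_contra h
      have : Z ⊆ {S} := by
        intro m hm; rcases hsub hm with h1 | h1
        · exact h1
        · exact absurd ((Set.mem_singleton_iff.mp h1) ▸ hm) h
      have := Set.ncard_le_ncard this (Set.finite_singleton S)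
      rw [Set.ncard_singleton] at this
      omega
    obtain ⟨s1, s2, s3, s4⟩ := hSin
    obtain ⟨t1, t2, t3, t4⟩ := hTin
    exact getST x s3 s4 t3 t4
      (fun ⟨_, _, q1, q2⟩ => sandwich s1 s2 t1 t2 q1 q2)
      (fun ⟨_, _, q1, q2⟩ => sandwich' s1 s2 t1 t2 q1 q2)
  · -- A and B are disjoint
    have hd : r A < l B ∨ r B < l A := by
      by_contra h
      push_neg at h
      exact hAB ⟨max (l A) (l B), ⟨le_max_left _ _, max_le (hlr A).le h.1⟩,
        ⟨le_max_right _ _, max_le h.2 (hlr B).le⟩⟩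
    -- in either case, S and T both contain the gap midpoint, and neither A nor B does
    have main : ∀ A' B' : Fin n,
        barAdj i l r y S A' → barAdj i l r y S B' →
        barAdj i l r y T A' → barAdj i l r y T B' →
        (∀ m : Fin n, m = S ∨ m = T ∨ m = A' ∨ m = B') →
        r A' < l B' → False := by
      intro A' B' hSA' hSB' hTA' hTB' huniv' hgap
      obtain ⟨x1, sa1, sa2, sa3, sa4, -⟩ := hSA'
      obtain ⟨x2, sb1, sb2, sb3, sb4, -⟩ := hSB'
      obtain ⟨x3, ta1, ta2, ta3, ta4, -⟩ := hTA'
      obtain ⟨x4, tb1, tb2, tb3, tb4, -⟩ := hTB'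
      set x := (r A' + l B') / 2 with hx
      have hx1 : r A' < x := by rw [hx]; linarith
      have hx2 : x < l B' := by rw [hx]; linarith
      have cS1 : l S ≤ x := le_trans sa1 (by linarith)
      have cS2 : x ≤ r S := le_trans (by linarith) sb2
      have cT1 : l T ≤ x := le_trans ta1 (by linarith)
      have cT2 : x ≤ r T := le_trans (by linarith) tb2
      apply hnST
      refine ⟨x, cS1, cS2, cT1, cT2, ?_⟩
      have hempty : {m : Fin n | min (y S) (y T) < y m ∧ y m < max (y S) (y T) ∧
          l m ≤ x ∧ x ≤ r m} = ∅ := by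
        rw [Set.eq_empty_iff_forall_notMem]
        rintro m ⟨m1, m2, m3, m4⟩
        rcases huniv' m with rfl | rfl | rfl | rfl
        · exact not_between_self m1 m2
        · exact not_between_self' m1 m2
        · linarith
        · linarith
      rw [hempty, Set.ncard_empty]
      exact Nat.zero_le i
    rcases hd with hd | hd
    · exact main A B hSA hSB hTA hTB
        (fun m => by rcases huniv m with h|h|h|h
                     · exact Or.inl h
                     · exact Or.inr (Or.inr (Or.inl h))
                     · exact Or.inr (Or.inl h)
                     · exact Or.inr (Or.inr (Or.inr h))) hd
    · exact main B A hSB hSA hTB hTA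
        (fun m => by rcases huniv m with h|h|h|h
                     · exact Or.inl h
                     · exact Or.inr (Or.inr (Or.inr h))
                     · exact Or.inr (Or.inl h)
                     · exact Or.inr (Or.inr (Or.inl h))) hd



lemma k5_not_bar : ¬ IsBarKVisibilityGraph 0 (⊤ : SimpleGraph (Fin 5)) := by
  rintro ⟨n, l, r, y, hlr, hy, ⟨e⟩⟩
  classical
  -- sort the five bars by height
  set σ := Tuple.sort (fun k : Fin 5 => y (e k)) with hσ
  set w : Fin 5 → Fin n := fun k => e (σ k) with hw
  have hinj : Function.Injective (fun k : Fin 5 => y (w k)) := by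
    intro a b h
    exact σ.injective (e.toEquiv.injective (hy h))
  have hmono : StrictMono (fun k : Fin 5 => y (w k)) := by
    have h1 : Monotone ((fun k : Fin 5 => y (e k)) ∘ σ) := Tuple.monotone_sort _
    exact h1.strictMono_of_injective hinj
  have hwinj : Function.Injective w := fun a b h => σ.injective (e.toEquiv.injective h)
  -- every two of these bars are adjacent, hence have a sight line with empty blocker set
  have hsight : ∀ p q : Fin 5, p ≠ q → ∃ x : ℝ,
      l (w p) ≤ x ∧ x ≤ r (w p) ∧ l (w q) ≤ x ∧ x ≤ r (w q) ∧
      ({m : Fin n | min (y (w p)) (y (w q)) < y m ∧ y m < max (y (w p)) (y (w q)) ∧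
        l m ≤ x ∧ x ≤ r m} = ∅) := by
    intro p q hpq
    have hadj : (barGraph 0 l r y).Adj (w p) (w q) := by
      refine e.map_rel_iff.mpr ?_
      exact (SimpleGraph.top_adj (σ p) (σ q)).mpr (fun h => hpq (σ.injective h))
    obtain ⟨-, h | h⟩ := (SimpleGraph.fromRel_adj (barAdj 0 l r y) _ _).mp hadj
    · obtain ⟨x, h1, h2, h3, h4, h5⟩ := h
      exact ⟨x, h1, h2, h3, h4,
        (Set.ncard_eq_zero (Set.toFinite _)).mp (Nat.le_zero.mp h5)⟩
    · obtain ⟨x, h1, h2, h3, h4, h5⟩ := barAdj_symm h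
      exact ⟨x, h1, h2, h3, h4,
        (Set.ncard_eq_zero (Set.toFinite _)).mp (Nat.le_zero.mp h5)⟩
  -- common point x0 covered by all five bars
  obtain ⟨k0, hk0⟩ := Finite.exists_max (fun k : Fin 5 => l (w k))
  set x0 := l (w k0) with hx0
  have hcov : ∀ k : Fin 5, l (w k) ≤ x0 ∧ x0 ≤ r (w k) := by
    intro k
    refine ⟨hk0 k, ?_⟩
    by_cases h : k = k0
    · subst h; exact (hlr _).le
    · obtain ⟨x, h1, h2, h3, h4, -⟩ := hsight k0 k (fun hc => h hc.symm)
      exact le_trans h1 h4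
  -- each skipping pair is right-good or left-good
  have key : ∀ p q m0 : Fin 5, p < m0 → m0 < q →
      (∀ m, p < m → m < q → r (w m) < r (w p) ∧ r (w m) < r (w q)) ∨
      (∀ m, p < m → m < q → -(l (w m)) < -(l (w p)) ∧ -(l (w m)) < -(l (w q))) := by
    intro p q m0 h1 h2
    have hpq : p < q := h1.trans h2
    obtain ⟨x, c1, c2, c3, c4, hZ⟩ := hsight p q hpq.ne
    have hnc : ∀ m, p < m → m < q → ¬(l (w m) ≤ x ∧ x ≤ r (w m)) := by
      intro m a b hc
      have hmem : w m ∈ {m : Fin n | min (y (w p)) (y (w q)) < y m ∧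
          y m < max (y (w p)) (y (w q)) ∧ l m ≤ x ∧ x ≤ r m} := by
        refine ⟨?_, ?_, hc.1, hc.2⟩
        · rw [min_eq_left (hmono hpq).le]; exact hmono a
        · rw [max_eq_right (hmono hpq).le]; exact hmono b
      rw [hZ] at hmem
      exact hmem
    rcases lt_trichotomy x x0 with hx | hx | hx
    · right
      intro m a b
      have hb := hnc m a b
      have hl : x < l (w m) := by
        by_contra hcon
        push_neg at hcon
        exact hb ⟨hcon, le_trans hx.le (hcov m).2⟩
      constructor
      · simp only [neg_lt_neg_iff]; exact lt_of_le_of_lt c1 hl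
      · simp only [neg_lt_neg_iff]; exact lt_of_le_of_lt c3 hl
    · exfalso
      refine hnc m0 h1 h2 ⟨?_, ?_⟩
      · rw [hx]; exact (hcov m0).1
      · rw [hx]; exact (hcov m0).2
    · left
      intro m a b
      have hb := hnc m a b
      have hr : r (w m) < x := by
        by_contra hcon
        push_neg at hcon
        exact hb ⟨le_trans (hcov m).1 hx.le, hcon⟩
      exact ⟨lt_of_lt_of_le hr c2, lt_of_lt_of_le hr c4⟩
  have cR : ∀ (f : Fin 5 → ℝ) (p p' q q' : Fin 5), p < p' → p' < q → q < q' →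
      (∀ m, p < m → m < q → f m < f p ∧ f m < f q) →
      (∀ m, p' < m → m < q' → f m < f p' ∧ f m < f q') → False := by
    intro f p p' q q' h1 h2 h3 hA hB
    have e1 := (hA p' h1 h2).2
    have e2 := (hB q h2 h3).1
    linarith
  have ha := key 0 2 1 (by decide) (by decide)
  have hd := key 1 3 2 (by decide) (by decide)
  have hf := key 2 4 3 (by decide) (by decide)
  have hb := key 0 3 1 (by decide) (by decide)
  have he := key 1 4 2 (by decide) (by decide)
  rcases ha with ha|ha <;> rcases hd with hd|hd <;> rcases hf with hf|hf <;>
    rcases hb with hb|hb <;> rcases he with he|he <;>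
    first
      | exact cR _ 0 1 2 3 (by decide) (by decide) (by decide) ha hd
      | exact cR _ 1 2 3 4 (by decide) (by decide) (by decide) hd hf
      | exact cR _ 0 2 3 4 (by decide) (by decide) (by decide) hb hf
      | exact cR _ 0 1 3 4 (by decide) (by decide) (by decide) hb he
      | exact cR _ 0 1 2 4 (by decide) (by decide) (by decide) ha he


/-- spiral of five arcs realizing `K₅`: arc `m` is `[2πm/5, 2πm/5 + π/2]`. -/
noncomputable def sK : Fin 5 → ℝ := fun m => 2 * π / 5 * m.val
noncomputable def LK : Fin 5 → ℝ := fun _ => π / 2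

lemma sK0 : sK 0 = 0 := by norm_num [sK]
lemma sK1 : sK 1 = 2*π/5 := by norm_num [sK]
lemma sK2 : sK 2 = 4*π/5 := by
  have h : ((2:Fin 5).val : ℝ) = 2 := by rw [show (2:Fin 5).val = 2 from rfl]; norm_num
  rw [sK, h]; ring
lemma sK3 : sK 3 = 6*π/5 := by
  have h : ((3:Fin 5).val : ℝ) = 3 := by rw [show (3:Fin 5).val = 3 from rfl]; norm_num
  rw [sK, h]; ring
lemma sK4 : sK 4 = 8*π/5 := by
  have h : ((4:Fin 5).val : ℝ) = 4 := by rw [show (4:Fin 5).val = 4 from rfl]; norm_num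
  rw [sK, h]; ring

lemma repK : IsArcRep LK := by
  intro m
  constructor
  · show (0:ℝ) ≤ π/2
    linarith [pi_pos]
  · show π/2 < 2*π
    linarith [pi_pos]

lemma nmK_1_p20 : ¬ arcMem (sK 1) (LK 1) (π/20) := by
  rw [sK1]; simp only [LK]
  exact not_arcMem_lo (by linarith [pi_pos]) (by linarith [pi_pos])

lemma nmK_2_p20 : ¬ arcMem (sK 2) (LK 2) (π/20) := by
  rw [sK2]; simp only [LK]
  exact not_arcMem_lo (by linarith [pi_pos]) (by linarith [pi_pos])

lemma nmK_3_p20 : ¬ arcMem (sK 3) (LK 3) (π/20) := by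
  rw [sK3]; simp only [LK]
  exact not_arcMem_lo (by linarith [pi_pos]) (by linarith [pi_pos])

lemma nmK_1_25 : ¬ arcMem (sK 1) (LK 1) (π/4 + π) := by
  rw [sK1]; simp only [LK]
  exact not_arcMem_hi (by linarith [pi_pos]) (by linarith [pi_pos])

lemma nmK_0_13 : ¬ arcMem (sK 0) (LK 0) (13*π/20) := by
  rw [sK0]; simp only [LK]
  exact not_arcMem_hi (by linarith [pi_pos]) (by linarith [pi_pos])

lemma nmK_0_33 : ¬ arcMem (sK 0) (LK 0) (13*π/20 + π) := by
  rw [sK0]; simp only [LK]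
  exact not_arcMem_hi (by linarith [pi_pos]) (by linarith [pi_pos])

lemma nmK_2_33 : ¬ arcMem (sK 2) (LK 2) (13*π/20 + π) := by
  rw [sK2]; simp only [LK]
  exact not_arcMem_hi (by linarith [pi_pos]) (by linarith [pi_pos])

lemma nmK_0_19 : ¬ arcMem (sK 0) (LK 0) (19*π/20) := by
  rw [sK0]; simp only [LK]
  exact not_arcMem_hi (by linarith [pi_pos]) (by linarith [pi_pos])

lemma nmK_1_19 : ¬ arcMem (sK 1) (LK 1) (19*π/20) := by
  rw [sK1]; simp only [LK]
  exact not_arcMem_hi (by linarith [pi_pos]) (by linarith [pi_pos])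

lemma nmK_0_39 : ¬ arcMem (sK 0) (LK 0) (19*π/20 + π) := by
  rw [sK0]; simp only [LK]
  exact not_arcMem_hi (by linarith [pi_pos]) (by linarith [pi_pos])

lemma nmK_1_39 : ¬ arcMem (sK 1) (LK 1) (19*π/20 + π) := by
  rw [sK1]; simp only [LK]
  exact not_arcMem_hi (by linarith [pi_pos]) (by linarith [pi_pos])

lemma nmK_3_39 : ¬ arcMem (sK 3) (LK 3) (19*π/20 + π) := by
  rw [sK3]; simp only [LK]
  exact not_arcMem_hi (by linarith [pi_pos]) (by linarith [pi_pos])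

lemma nmK_1_28 : ¬ arcMem (sK 1) (LK 1) (2*π/5 + π) := by
  rw [sK1]; simp only [LK]
  exact not_arcMem_hi (by linarith [pi_pos]) (by linarith [pi_pos])

lemma nmK_2_28 : ¬ arcMem (sK 2) (LK 2) (2*π/5 + π) := by
  rw [sK2]; simp only [LK]
  exact not_arcMem_hi (by linarith [pi_pos]) (by linarith [pi_pos])

lemma nmK_0_16 : ¬ arcMem (sK 0) (LK 0) (4*π/5) := by
  rw [sK0]; simp only [LK]
  exact not_arcMem_hi (by linarith [pi_pos]) (by linarith [pi_pos])

lemma nmK_0_36 : ¬ arcMem (sK 0) (LK 0) (4*π/5 + π) := by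
  rw [sK0]; simp only [LK]
  exact not_arcMem_hi (by linarith [pi_pos]) (by linarith [pi_pos])

lemma nmK_2_36 : ¬ arcMem (sK 2) (LK 2) (4*π/5 + π) := by
  rw [sK2]; simp only [LK]
  exact not_arcMem_hi (by linarith [pi_pos]) (by linarith [pi_pos])

lemma nmK_3_36 : ¬ arcMem (sK 3) (LK 3) (4*π/5 + π) := by
  rw [sK3]; simp only [LK]
  exact not_arcMem_hi (by linarith [pi_pos]) (by linarith [pi_pos])

lemma adjK01 (j : ℕ) : arcAdj j sK LK 0 1 := by
  left
  refine ⟨9*π/20, arcMem_of ?_ ?_, arcMem_of ?_ ?_, ?_⟩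
  · rw [sK0]; linarith [pi_pos]
  · rw [sK0]; simp only [LK]; linarith [pi_pos]
  · rw [sK1]; linarith [pi_pos]
  · rw [sK1]; simp only [LK]; linarith [pi_pos]
  · have hZ : {m : Fin 5 | (0:Fin 5) < m ∧ m < 1 ∧ arcMem (sK m) (LK m) (9*π/20)} = ∅ := by
      rw [Set.eq_empty_iff_forall_notMem]
      rintro m ⟨h1, h2, h3⟩
      fin_cases m
      · exact absurd h1 (by decide)
      · exact absurd h2 (by decide)
      · exact absurd h2 (by decide)
      · exact absurd h2 (by decide)
      · exact absurd h2 (by decide)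
    rw [hZ, Set.ncard_empty]
    exact Nat.zero_le j

lemma adjK12 (j : ℕ) : arcAdj j sK LK 1 2 := by
  left
  refine ⟨17*π/20, arcMem_of ?_ ?_, arcMem_of ?_ ?_, ?_⟩
  · rw [sK1]; linarith [pi_pos]
  · rw [sK1]; simp only [LK]; linarith [pi_pos]
  · rw [sK2]; linarith [pi_pos]
  · rw [sK2]; simp only [LK]; linarith [pi_pos]
  · have hZ : {m : Fin 5 | (1:Fin 5) < m ∧ m < 2 ∧ arcMem (sK m) (LK m) (17*π/20)} = ∅ := by
      rw [Set.eq_empty_iff_forall_notMem]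
      rintro m ⟨h1, h2, h3⟩
      fin_cases m
      · exact absurd h1 (by decide)
      · exact absurd h1 (by decide)
      · exact absurd h2 (by decide)
      · exact absurd h2 (by decide)
      · exact absurd h2 (by decide)
    rw [hZ, Set.ncard_empty]
    exact Nat.zero_le j

lemma adjK23 (j : ℕ) : arcAdj j sK LK 2 3 := by
  left
  refine ⟨5*π/4, arcMem_of ?_ ?_, arcMem_of ?_ ?_, ?_⟩
  · rw [sK2]; linarith [pi_pos]
  · rw [sK2]; simp only [LK]; linarith [pi_pos]
  · rw [sK3]; linarith [pi_pos]
  · rw [sK3]; simp only [LK]; linarith [pi_pos]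
  · have hZ : {m : Fin 5 | (2:Fin 5) < m ∧ m < 3 ∧ arcMem (sK m) (LK m) (5*π/4)} = ∅ := by
      rw [Set.eq_empty_iff_forall_notMem]
      rintro m ⟨h1, h2, h3⟩
      fin_cases m
      · exact absurd h1 (by decide)
      · exact absurd h1 (by decide)
      · exact absurd h1 (by decide)
      · exact absurd h2 (by decide)
      · exact absurd h2 (by decide)
    rw [hZ, Set.ncard_empty]
    exact Nat.zero_le j

lemma adjK34 (j : ℕ) : arcAdj j sK LK 3 4 := by
  left
  refine ⟨33*π/20, arcMem_of ?_ ?_, arcMem_of ?_ ?_, ?_⟩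
  · rw [sK3]; linarith [pi_pos]
  · rw [sK3]; simp only [LK]; linarith [pi_pos]
  · rw [sK4]; linarith [pi_pos]
  · rw [sK4]; simp only [LK]; linarith [pi_pos]
  · have hZ : {m : Fin 5 | (3:Fin 5) < m ∧ m < 4 ∧ arcMem (sK m) (LK m) (33*π/20)} = ∅ := by
      rw [Set.eq_empty_iff_forall_notMem]
      rintro m ⟨h1, h2, h3⟩
      fin_cases m
      · exact absurd h1 (by decide)
      · exact absurd h1 (by decide)
      · exact absurd h1 (by decide)
      · exact absurd h1 (by decide)
      · exact absurd h2 (by decide)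
    rw [hZ, Set.ncard_empty]
    exact Nat.zero_le j

lemma adjK04 (j : ℕ) : arcAdj j sK LK 0 4 := by
  left
  refine ⟨π/20, arcMem_of ?_ ?_, arcMem_wrap ?_ ?_, ?_⟩
  · rw [sK0]; linarith [pi_pos]
  · rw [sK0]; simp only [LK]; linarith [pi_pos]
  · rw [sK4]; linarith [pi_pos]
  · rw [sK4]; simp only [LK]; linarith [pi_pos]
  · have hZ : {m : Fin 5 | (0:Fin 5) < m ∧ m < 4 ∧ arcMem (sK m) (LK m) (π/20)} = ∅ := by
      rw [Set.eq_empty_iff_forall_notMem]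
      rintro m ⟨h1, h2, h3⟩
      fin_cases m
      · exact absurd h1 (by decide)
      · exact nmK_1_p20 h3
      · exact nmK_2_p20 h3
      · exact nmK_3_p20 h3
      · exact absurd h2 (by decide)
    rw [hZ, Set.ncard_empty]
    exact Nat.zero_le j

lemma adjK02 (j : ℕ) : arcAdj j sK LK 0 2 := by
  right
  refine ⟨π/4, arcMem_of ?_ ?_, arcMem_of ?_ ?_, ?_⟩
  · rw [sK0]; linarith [pi_pos]
  · rw [sK0]; simp only [LK]; linarith [pi_pos]
  · rw [sK2]; linarith [pi_pos]
  · rw [sK2]; simp only [LK]; linarith [pi_pos]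
  · have hZ : {m : Fin 5 | m ≠ 0 ∧ m ≠ 2 ∧
        ((m < 0 ∧ arcMem (sK m) (LK m) (π/4)) ∨ (m < 2 ∧ arcMem (sK m) (LK m) (π/4 + π)))} = ∅ := by
      rw [Set.eq_empty_iff_forall_notMem]
      rintro m ⟨h1, h2, h3⟩
      fin_cases m
      · exact h1 rfl
      · rcases h3 with ⟨h4, -⟩ | ⟨-, h4⟩ <;> [exact absurd h4 (by decide); exact nmK_1_25 h4]
      · exact h2 rfl
      · rcases h3 with ⟨h4, -⟩ | ⟨h4, -⟩ <;> exact absurd h4 (by decide)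
      · rcases h3 with ⟨h4, -⟩ | ⟨h4, -⟩ <;> exact absurd h4 (by decide)
    rw [hZ, Set.ncard_empty]
    exact Nat.zero_le j

lemma adjK13 (j : ℕ) : arcAdj j sK LK 1 3 := by
  right
  refine ⟨13*π/20, arcMem_of ?_ ?_, arcMem_of ?_ ?_, ?_⟩
  · rw [sK1]; linarith [pi_pos]
  · rw [sK1]; simp only [LK]; linarith [pi_pos]
  · rw [sK3]; linarith [pi_pos]
  · rw [sK3]; simp only [LK]; linarith [pi_pos]
  · have hZ : {m : Fin 5 | m ≠ 1 ∧ m ≠ 3 ∧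
        ((m < 1 ∧ arcMem (sK m) (LK m) (13*π/20)) ∨ (m < 3 ∧ arcMem (sK m) (LK m) (13*π/20 + π)))} = ∅ := by
      rw [Set.eq_empty_iff_forall_notMem]
      rintro m ⟨h1, h2, h3⟩
      fin_cases m
      · rcases h3 with ⟨-, h4⟩ | ⟨-, h4⟩ <;> [exact nmK_0_13 h4; exact nmK_0_33 h4]
      · exact h1 rfl
      · rcases h3 with ⟨h4, -⟩ | ⟨-, h4⟩ <;> [exact absurd h4 (by decide); exact nmK_2_33 h4]
      · exact h2 rfl
      · rcases h3 with ⟨h4, -⟩ | ⟨h4, -⟩ <;> exact absurd h4 (by decide)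
    rw [hZ, Set.ncard_empty]
    exact Nat.zero_le j

lemma adjK24 (j : ℕ) : arcAdj j sK LK 2 4 := by
  right
  refine ⟨19*π/20, arcMem_of ?_ ?_, arcMem_of ?_ ?_, ?_⟩
  · rw [sK2]; linarith [pi_pos]
  · rw [sK2]; simp only [LK]; linarith [pi_pos]
  · rw [sK4]; linarith [pi_pos]
  · rw [sK4]; simp only [LK]; linarith [pi_pos]
  · have hZ : {m : Fin 5 | m ≠ 2 ∧ m ≠ 4 ∧
        ((m < 2 ∧ arcMem (sK m) (LK m) (19*π/20)) ∨ (m < 4 ∧ arcMem (sK m) (LK m) (19*π/20 + π)))} = ∅ := by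
      rw [Set.eq_empty_iff_forall_notMem]
      rintro m ⟨h1, h2, h3⟩
      fin_cases m
      · rcases h3 with ⟨-, h4⟩ | ⟨-, h4⟩ <;> [exact nmK_0_19 h4; exact nmK_0_39 h4]
      · rcases h3 with ⟨-, h4⟩ | ⟨-, h4⟩ <;> [exact nmK_1_19 h4; exact nmK_1_39 h4]
      · exact h1 rfl
      · rcases h3 with ⟨h4, -⟩ | ⟨-, h4⟩ <;> [exact absurd h4 (by decide); exact nmK_3_39 h4]
      · exact h2 rfl
    rw [hZ, Set.ncard_empty]
    exact Nat.zero_le j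

lemma adjK03 (j : ℕ) : arcAdj j sK LK 0 3 := by
  right
  refine ⟨2*π/5, arcMem_of ?_ ?_, arcMem_of ?_ ?_, ?_⟩
  · rw [sK0]; linarith [pi_pos]
  · rw [sK0]; simp only [LK]; linarith [pi_pos]
  · rw [sK3]; linarith [pi_pos]
  · rw [sK3]; simp only [LK]; linarith [pi_pos]
  · have hZ : {m : Fin 5 | m ≠ 0 ∧ m ≠ 3 ∧
        ((m < 0 ∧ arcMem (sK m) (LK m) (2*π/5)) ∨ (m < 3 ∧ arcMem (sK m) (LK m) (2*π/5 + π)))} = ∅ := by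
      rw [Set.eq_empty_iff_forall_notMem]
      rintro m ⟨h1, h2, h3⟩
      fin_cases m
      · exact h1 rfl
      · rcases h3 with ⟨h4, -⟩ | ⟨-, h4⟩ <;> [exact absurd h4 (by decide); exact nmK_1_28 h4]
      · rcases h3 with ⟨h4, -⟩ | ⟨-, h4⟩ <;> [exact absurd h4 (by decide); exact nmK_2_28 h4]
      · exact h2 rfl
      · rcases h3 with ⟨h4, -⟩ | ⟨h4, -⟩ <;> exact absurd h4 (by decide)
    rw [hZ, Set.ncard_empty]
    exact Nat.zero_le j

lemma adjK14 (j : ℕ) : arcAdj j sK LK 1 4 := by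
  right
  refine ⟨4*π/5, arcMem_of ?_ ?_, arcMem_of ?_ ?_, ?_⟩
  · rw [sK1]; linarith [pi_pos]
  · rw [sK1]; simp only [LK]; linarith [pi_pos]
  · rw [sK4]; linarith [pi_pos]
  · rw [sK4]; simp only [LK]; linarith [pi_pos]
  · have hZ : {m : Fin 5 | m ≠ 1 ∧ m ≠ 4 ∧
        ((m < 1 ∧ arcMem (sK m) (LK m) (4*π/5)) ∨ (m < 4 ∧ arcMem (sK m) (LK m) (4*π/5 + π)))} = ∅ := by
      rw [Set.eq_empty_iff_forall_notMem]
      rintro m ⟨h1, h2, h3⟩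
      fin_cases m
      · rcases h3 with ⟨-, h4⟩ | ⟨-, h4⟩ <;> [exact nmK_0_16 h4; exact nmK_0_36 h4]
      · exact h1 rfl
      · rcases h3 with ⟨h4, -⟩ | ⟨-, h4⟩ <;> [exact absurd h4 (by decide); exact nmK_2_36 h4]
      · rcases h3 with ⟨h4, -⟩ | ⟨-, h4⟩ <;> [exact absurd h4 (by decide); exact nmK_3_36 h4]
      · exact h2 rfl
    rw [hZ, Set.ncard_empty]
    exact Nat.zero_le j

lemma arcK_eq_top (j : ℕ) : arcGraph j sK LK = (⊤ : SimpleGraph (Fin 5)) := by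
  have hK : ∀ p q : Fin 5, p < q → arcAdj j sK LK p q := by
    intro p q h
    fin_cases p <;> fin_cases q <;>
      first
        | exact absurd h (by decide)
        | exact adjK01 j
        | exact adjK02 j
        | exact adjK03 j
        | exact adjK04 j
        | exact adjK12 j
        | exact adjK13 j
        | exact adjK14 j
        | exact adjK23 j
        | exact adjK24 j
        | exact adjK34 j
  ext a b
  rw [SimpleGraph.top_adj, arcGraph, SimpleGraph.fromRel_adj]
  constructor
  · rintro ⟨h, -⟩; exact h
  · intro h
    refine ⟨h, ?_⟩
    rcases lt_or_gt_of_ne h with h' | h'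
    · exact Or.inl ⟨h', hK _ _ h'⟩
    · exact Or.inr ⟨h', hK _ _ h'⟩


/-- arcs realizing `C₄`: `A₀ = [0, 1/5]`, `A₁ = [3/20, 7/20]`, `A₂ = [3/10, 1/2]`,
`A₃ = [2/5, π + 1/10]` (in radians; the edge `0–3` goes through the center). -/
noncomputable def sC : Fin 4 → ℝ
  | 0 => 0
  | 1 => 3/20
  | 2 => 3/10
  | 3 => 2/5

noncomputable def LC : Fin 4 → ℝ
  | 0 => 1/5
  | 1 => 1/5
  | 2 => 1/5
  | 3 => π - 3/10

lemma sC0 : sC 0 = 0 := rfl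
lemma sC1 : sC 1 = 3/20 := rfl
lemma sC2 : sC 2 = 3/10 := rfl
lemma sC3 : sC 3 = 2/5 := rfl
lemma LC0 : LC 0 = 1/5 := rfl
lemma LC1 : LC 1 = 1/5 := rfl
lemma LC2 : LC 2 = 1/5 := rfl
lemma LC3 : LC 3 = π - 3/10 := rfl

lemma repC : IsArcRep LC := by
  intro m
  match m with
  | 0 => exact ⟨by rw [LC0]; norm_num, by rw [LC0]; linarith [pi_gt_three]⟩
  | 1 => exact ⟨by rw [LC1]; norm_num, by rw [LC1]; linarith [pi_gt_three]⟩
  | 2 => exact ⟨by rw [LC2]; norm_num, by rw [LC2]; linarith [pi_gt_three]⟩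
  | 3 => exact ⟨by rw [LC3]; linarith [pi_gt_three], by rw [LC3]; linarith [pi_pos]⟩

lemma nmC_1_c : ¬ arcMem (sC 1) (LC 1) (1/20 + π) := by
  rw [sC1, LC1]
  exact not_arcMem_hi (by linarith [pi_gt_three]) (by linarith [pi_pos])

lemma nmC_2_c : ¬ arcMem (sC 2) (LC 2) (1/20 + π) := by
  rw [sC2, LC2]
  exact not_arcMem_hi (by linarith [pi_gt_three]) (by linarith [pi_pos])

lemma adjC01 (j : ℕ) : arcAdj j sC LC 0 1 := by
  left
  refine ⟨3/20, arcMem_of ?_ ?_, arcMem_of ?_ ?_, ?_⟩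
  · rw [sC0]; norm_num
  · rw [sC0, LC0]; norm_num
  · rw [sC1]
  · rw [sC1, LC1]; norm_num
  · have hZ : {m : Fin 4 | (0:Fin 4) < m ∧ m < 1 ∧ arcMem (sC m) (LC m) (3/20)} = ∅ := by
      rw [Set.eq_empty_iff_forall_notMem]
      rintro m ⟨h1, h2, h3⟩
      fin_cases m
      · exact absurd h1 (by decide)
      · exact absurd h2 (by decide)
      · exact absurd h2 (by decide)
      · exact absurd h2 (by decide)
    rw [hZ, Set.ncard_empty]
    exact Nat.zero_le j

lemma adjC12 (j : ℕ) : arcAdj j sC LC 1 2 := by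
  left
  refine ⟨3/10, arcMem_of ?_ ?_, arcMem_of ?_ ?_, ?_⟩
  · rw [sC1]; norm_num
  · rw [sC1, LC1]; norm_num
  · rw [sC2]
  · rw [sC2, LC2]; norm_num
  · have hZ : {m : Fin 4 | (1:Fin 4) < m ∧ m < 2 ∧ arcMem (sC m) (LC m) (3/10)} = ∅ := by
      rw [Set.eq_empty_iff_forall_notMem]
      rintro m ⟨h1, h2, h3⟩
      fin_cases m
      · exact absurd h1 (by decide)
      · exact absurd h1 (by decide)
      · exact absurd h2 (by decide)
      · exact absurd h2 (by decide)
    rw [hZ, Set.ncard_empty]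
    exact Nat.zero_le j

lemma adjC23 (j : ℕ) : arcAdj j sC LC 2 3 := by
  left
  refine ⟨9/20, arcMem_of ?_ ?_, arcMem_of ?_ ?_, ?_⟩
  · rw [sC2]; norm_num
  · rw [sC2, LC2]; norm_num
  · rw [sC3]; norm_num
  · rw [sC3, LC3]; linarith [pi_gt_three]
  · have hZ : {m : Fin 4 | (2:Fin 4) < m ∧ m < 3 ∧ arcMem (sC m) (LC m) (9/20)} = ∅ := by
      rw [Set.eq_empty_iff_forall_notMem]
      rintro m ⟨h1, h2, h3⟩
      fin_cases m
      · exact absurd h1 (by decide)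
      · exact absurd h1 (by decide)
      · exact absurd h1 (by decide)
      · exact absurd h2 (by decide)
    rw [hZ, Set.ncard_empty]
    exact Nat.zero_le j

lemma adjC03 (j : ℕ) : arcAdj j sC LC 0 3 := by
  right
  refine ⟨1/20, arcMem_of ?_ ?_, arcMem_of ?_ ?_, ?_⟩
  · rw [sC0]; norm_num
  · rw [sC0, LC0]; norm_num
  · rw [sC3]; linarith [pi_gt_three]
  · rw [sC3, LC3]; linarith [pi_pos]
  · have hZ : {m : Fin 4 | m ≠ 0 ∧ m ≠ 3 ∧
        ((m < 0 ∧ arcMem (sC m) (LC m) (1/20)) ∨ (m < 3 ∧ arcMem (sC m) (LC m) (1/20 + π)))} = ∅ := by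
      rw [Set.eq_empty_iff_forall_notMem]
      rintro m ⟨h1, h2, h3⟩
      fin_cases m
      · exact h1 rfl
      · rcases h3 with ⟨h4, -⟩ | ⟨-, h4⟩
        · exact absurd h4 (by decide)
        · exact nmC_1_c h4
      · rcases h3 with ⟨h4, -⟩ | ⟨-, h4⟩
        · exact absurd h4 (by decide)
        · exact nmC_2_c h4
      · exact h2 rfl
    rw [hZ, Set.ncard_empty]
    exact Nat.zero_le j

lemma nonC02 (j : ℕ) : ¬ arcAdj j sC LC 0 2 := by
  rintro (⟨φ, ⟨t1, ht10, ht1L, z1, hz1⟩, ⟨t2, ht20, ht2L, z2, hz2⟩, -⟩ |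
          ⟨φ, ⟨t1, ht10, ht1L, z1, hz1⟩, ⟨t2, ht20, ht2L, z2, hz2⟩, -⟩)
  · rw [sC0] at hz1
    rw [LC0] at ht1L
    rw [sC2] at hz2
    rw [LC2] at ht2L
    have heq : 2*π*((z1:ℝ) - (z2:ℝ)) = 3/10 + t2 - t1 := by
      have h := hz1.symm.trans hz2
      linarith
    rcases two_pi_z (z1 - z2) with h|h|h <;> push_cast at h
    · linarith [pi_pos, pi_gt_three]
    · linarith [pi_pos, pi_gt_three]
    · linarith [pi_pos, pi_gt_three]
  · rw [sC0] at hz1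
    rw [LC0] at ht1L
    rw [sC2] at hz2
    rw [LC2] at ht2L
    have heq : 2*π*((z2:ℝ) - (z1:ℝ)) = π + t1 - t2 - 3/10 := by
      have h : φ + π = 3/10 + t2 + 2*π*z2 := hz2
      rw [hz1] at h
      linarith
    rcases two_pi_z (z2 - z1) with h|h|h <;> push_cast at h
    · linarith [pi_pos, pi_gt_three]
    · linarith [pi_pos, pi_gt_three]
    · linarith [pi_pos, pi_gt_three]

lemma nonC13 (j : ℕ) : ¬ arcAdj j sC LC 1 3 := by
  rintro (⟨φ, ⟨t1, ht10, ht1L, z1, hz1⟩, ⟨t2, ht20, ht2L, z2, hz2⟩, -⟩ |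
          ⟨φ, ⟨t1, ht10, ht1L, z1, hz1⟩, ⟨t2, ht20, ht2L, z2, hz2⟩, -⟩)
  · rw [sC1] at hz1
    rw [LC1] at ht1L
    rw [sC3] at hz2
    rw [LC3] at ht2L
    have heq : 2*π*((z1:ℝ) - (z2:ℝ)) = 1/4 + t2 - t1 := by
      have h := hz1.symm.trans hz2
      linarith
    rcases two_pi_z (z1 - z2) with h|h|h <;> push_cast at h
    · linarith [pi_pos, pi_gt_three]
    · linarith [pi_pos, pi_gt_three]
    · linarith [pi_pos, pi_gt_three]
  · rw [sC1] at hz1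
    rw [LC1] at ht1L
    rw [sC3] at hz2
    rw [LC3] at ht2L
    have heq : 2*π*((z2:ℝ) - (z1:ℝ)) = π + t1 - t2 - 1/4 := by
      have h : φ + π = 2/5 + t2 + 2*π*z2 := hz2
      rw [hz1] at h
      linarith
    rcases two_pi_z (z2 - z1) with h|h|h <;> push_cast at h
    · linarith [pi_pos, pi_gt_three]
    · linarith [pi_pos, pi_gt_three]
    · linarith [pi_pos, pi_gt_three]

lemma arcC_eq (j : ℕ) : arcGraph j sC LC = G4 := by
  ext a b
  rw [arcGraph, SimpleGraph.fromRel_adj]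
  constructor
  · rintro ⟨hne, ⟨hlt, hadj⟩ | ⟨hlt, hadj⟩⟩ <;>
      fin_cases a <;> fin_cases b <;>
        first
          | decide
          | exact absurd hlt (by decide)
          | exact absurd hadj (nonC02 j)
          | exact absurd hadj (nonC13 j)
  · intro h
    have hne : a ≠ b := G4.ne_of_adj h
    refine ⟨hne, ?_⟩
    fin_cases a <;> fin_cases b <;>
      first
        | exact absurd h (by decide)
        | exact Or.inl ⟨by decide, adjC01 j⟩
        | exact Or.inr ⟨by decide, adjC01 j⟩
        | exact Or.inl ⟨by decide, adjC12 j⟩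
        | exact Or.inr ⟨by decide, adjC12 j⟩
        | exact Or.inl ⟨by decide, adjC23 j⟩
        | exact Or.inr ⟨by decide, adjC23 j⟩
        | exact Or.inl ⟨by decide, adjC03 j⟩
        | exact Or.inr ⟨by decide, adjC03 j⟩


end ArcBar

/-- For all `i, j ≥ 0`, the family of arc `j`-visibility graphs is not contained
in the family of bar `i`-visibility graphs. -/
theorem arc_not_contained_in_bar (i j : ℕ) :
    ∃ (n : ℕ) (G : SimpleGraph (Fin n)),
      IsArcKVisibilityGraph j G ∧ ¬ IsBarKVisibilityGraph i G := by
  rcases Nat.eq_zero_or_pos i with hi | hi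
  · subst hi
    exact ⟨5, ⊤, ⟨5, ArcBar.sK, ArcBar.LK, ArcBar.repK,
      ⟨ArcBar.gIsoOfEq (ArcBar.arcK_eq_top j).symm⟩⟩, ArcBar.k5_not_bar⟩
  · exact ⟨4, ArcBar.G4, ⟨4, ArcBar.sC, ArcBar.LC, ArcBar.repC,
      ⟨ArcBar.gIsoOfEq (ArcBar.arcC_eq j).symm⟩⟩, ArcBar.c4_not_bar i hi⟩
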